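/- Let A = k[x]/(x²−hx−t) with the Frobenius structure above, and let the twisted action be μ̃(a⊗b) = ab − ε(b)·(2x−h)a and the twisted coaction Δ̃(a) = Δ(a) − (2x−h)a ⊗ 1. Then the Frobenius-type compatibility holds: (μ̃⊗id)∘(id⊗Δ) = Δ̃∘μ̃ = (id⊗μ)∘(Δ̃⊗id) as maps A⊗A → A⊗A. -/

import Mathlib

open Polynomial TensorProduct

/-- The Frobenius algebra `C_{h,t} = k[x]/(x² - hx - t)`. -/
noncomputable abbrev Cht (k : Type) [CommRing k] (h t : k) : Type :=
  AdjoinRoot (X ^ 2 - C h * X - C t : k[X])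

/-- The generator `x` of `C_{h,t}`. -/
noncomputable abbrev xg (k : Type) [CommRing k] (h t : k) : Cht k h t :=
  AdjoinRoot.root _

/-- Frobenius-type compatibility of the twisted action `μ̃` and twisted coaction `Δ̃`:
`(μ̃⊗id)∘(id⊗Δ) = Δ̃∘μ̃ = (id⊗μ)∘(Δ̃⊗id)` as maps `A⊗A → A⊗A`. -/
theorem stmt19 (k : Type) [CommRing k] (h t : k)
    (Δ : Cht k h t →ₗ[k] Cht k h t ⊗[k] Cht k h t)
    (ε : Cht k h t →ₗ[k] k)
    (hΔ1 : Δ 1 = 1 ⊗ₜ[k] xg k h t + xg k h t ⊗ₜ[k] 1 - h • ((1 : Cht k h t) ⊗ₜ[k] 1))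
    (hΔx : Δ (xg k h t) = xg k h t ⊗ₜ[k] xg k h t + t • ((1 : Cht k h t) ⊗ₜ[k] 1))
    (hε1 : ε 1 = 0) (hεx : ε (xg k h t) = 1)
    -- the twisted action `μ̃(a⊗b) = ab − ε(b)·(2x−h)a`
    (μt : Cht k h t ⊗[k] Cht k h t →ₗ[k] Cht k h t)
    (hμt : ∀ a b : Cht k h t,
      μt (a ⊗ₜ[k] b)
        = a * b - ε b • ((2 * xg k h t - algebraMap k (Cht k h t) h) * a))
    -- the twisted coaction `Δ̃(a) = Δ(a) − (2x−h)a ⊗ 1`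
    (Δt : Cht k h t →ₗ[k] Cht k h t ⊗[k] Cht k h t)
    (hΔt : ∀ a : Cht k h t,
      Δt a = Δ a - ((2 * xg k h t - algebraMap k (Cht k h t) h) * a) ⊗ₜ[k] 1) :
    (TensorProduct.map μt LinearMap.id).comp
        (((TensorProduct.assoc k (Cht k h t) (Cht k h t) (Cht k h t)).symm.toLinearMap).comp
          (TensorProduct.map LinearMap.id Δ))
      = Δt.comp μt ∧
    Δt.comp μt
      = (TensorProduct.map LinearMap.id (LinearMap.mul' k (Cht k h t))).comp
          (((TensorProduct.assoc k (Cht k h t) (Cht k h t) (Cht k h t)).toLinearMap).comp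
            (TensorProduct.map Δt LinearMap.id)) := by
  obtain hk | hk := subsingleton_or_nontrivial k
  · haveI : Subsingleton (Cht k h t ⊗[k] Cht k h t) := Module.subsingleton k _
    exact ⟨Subsingleton.elim _ _, Subsingleton.elim _ _⟩
  -- the relation x² = h•x + t•1
  have hH : algebraMap k (Cht k h t) h = h • (1 : Cht k h t) := Algebra.algebraMap_eq_smul_one h
  have hx2 : xg k h t * xg k h t = h • xg k h t + t • (1 : Cht k h t) := by
    have h0 := AdjoinRoot.eval₂_root (X ^ 2 - C h * X - C t : k[X])
    simp only [eval₂_sub, eval₂_pow, eval₂_mul, eval₂_X, eval₂_C, sub_eq_zero, pow_two] at h0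
    rw [sub_eq_iff_eq_add] at h0
    rw [show xg k h t = AdjoinRoot.root (X ^ 2 - C h * X - C t : k[X]) from rfl, h0,
      ← AdjoinRoot.algebraMap_eq, Algebra.smul_def, Algebra.smul_def, mul_one]
    ring
  have hE1 : (2 * xg k h t - algebraMap k (Cht k h t) h) * 1
      = xg k h t + xg k h t - h • (1 : Cht k h t) := by
    rw [mul_one, hH, two_mul]
  have hEx : (2 * xg k h t - algebraMap k (Cht k h t) h) * xg k h t
      = h • xg k h t + t • (1 : Cht k h t) + t • (1 : Cht k h t) := by
    rw [hH, sub_mul, two_mul, add_mul, hx2, smul_mul_assoc, one_mul]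
    module
  -- values of the twisted action and coaction on basis elements
  have hμ11 : μt (1 ⊗ₜ[k] 1) = 1 := by rw [hμt, hε1]; simp
  have hμ1x : μt (1 ⊗ₜ[k] xg k h t) = h • 1 - xg k h t := by
    rw [hμt, hεx, one_smul, hE1, one_mul]; module
  have hμx1 : μt (xg k h t ⊗ₜ[k] 1) = xg k h t := by rw [hμt, hε1]; simp
  have hμxx : μt (xg k h t ⊗ₜ[k] xg k h t) = -(t • 1) := by
    rw [hμt, hεx, one_smul, hEx, hx2]; module
  have hΔt1 : Δt 1 = 1 ⊗ₜ[k] xg k h t - xg k h t ⊗ₜ[k] 1 := by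
    rw [hΔt, hΔ1, hE1]
    simp only [add_tmul, sub_tmul, smul_tmul']
    module
  have hΔtx : Δt (xg k h t) = xg k h t ⊗ₜ[k] xg k h t - t • ((1 : Cht k h t) ⊗ₜ[k] 1)
      - h • (xg k h t ⊗ₜ[k] 1) := by
    rw [hΔt, hΔx, hEx]
    simp only [add_tmul, sub_tmul, smul_tmul']
    module
  -- the power basis {1, x}
  have hmonic : (X ^ 2 - C h * X - C t : k[X]).Monic := by monicity!
  have hdim : (AdjoinRoot.powerBasis' hmonic).dim = 2 := by
    show (X ^ 2 - C h * X - C t : k[X]).natDegree = 2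
    compute_degree!
  let B : Module.Basis (Fin 2) k (Cht k h t) :=
    (AdjoinRoot.powerBasis' hmonic).basis.reindex (finCongr hdim)
  have hB0 : B 0 = 1 := by
    rw [Module.Basis.reindex_apply, PowerBasis.coe_basis]; simp
  have hB1 : B 1 = xg k h t := by
    rw [Module.Basis.reindex_apply, PowerBasis.coe_basis]
    simp [AdjoinRoot.powerBasis'_gen]
  have key1 : ∀ a b : Cht k h t, (a = 1 ∨ a = xg k h t) → (b = 1 ∨ b = xg k h t) →
      (TensorProduct.map μt LinearMap.id).comp
        (((TensorProduct.assoc k (Cht k h t) (Cht k h t) (Cht k h t)).symm.toLinearMap).comp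
          (TensorProduct.map LinearMap.id Δ)) (a ⊗ₜ[k] b) = Δt.comp μt (a ⊗ₜ[k] b) := by
    rintro a b (rfl | rfl) (rfl | rfl) <;>
    · simp only [LinearMap.comp_apply, TensorProduct.map_tmul, LinearMap.id_coe, id_eq,
        hΔ1, hΔx, tmul_add, tmul_sub, tmul_smul, map_add, map_sub, map_smul, map_neg,
        LinearEquiv.coe_coe, TensorProduct.assoc_symm_tmul, TensorProduct.map_tmul,
        hμ11, hμ1x, hμx1, hμxx, hΔt1, hΔtx]
      try simp only [sub_tmul, add_tmul, neg_tmul, tmul_neg, tmul_sub, tmul_add,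
        ← smul_tmul', tmul_smul]
      try module
  have key2 : ∀ a b : Cht k h t, (a = 1 ∨ a = xg k h t) → (b = 1 ∨ b = xg k h t) →
      Δt.comp μt (a ⊗ₜ[k] b)
      = (TensorProduct.map LinearMap.id (LinearMap.mul' k (Cht k h t))).comp
          (((TensorProduct.assoc k (Cht k h t) (Cht k h t) (Cht k h t)).toLinearMap).comp
            (TensorProduct.map Δt LinearMap.id)) (a ⊗ₜ[k] b) := by
    rintro a b (rfl | rfl) (rfl | rfl) <;>
    · simp only [LinearMap.comp_apply, TensorProduct.map_tmul, LinearMap.id_coe, id_eq,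
        map_add, map_sub, map_smul, map_neg, LinearEquiv.coe_coe, TensorProduct.assoc_tmul,
        sub_tmul, add_tmul, neg_tmul, ← smul_tmul', LinearMap.mul'_apply,
        hμ11, hμ1x, hμx1, hμxx, hΔt1, hΔtx, hx2,
        one_mul, mul_one, tmul_add, tmul_sub, tmul_neg, tmul_smul]
      try module
  have hcase : ∀ (f g : Cht k h t ⊗[k] Cht k h t →ₗ[k] Cht k h t ⊗[k] Cht k h t),
      (∀ a b : Cht k h t, (a = 1 ∨ a = xg k h t) → (b = 1 ∨ b = xg k h t) →
        f (a ⊗ₜ[k] b) = g (a ⊗ₜ[k] b)) → f = g := by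
    intro f g hf
    apply (B.tensorProduct B).ext
    rintro ⟨i, j⟩
    rw [Module.Basis.tensorProduct_apply]
    fin_cases i <;> fin_cases j <;>
      first
      | exact hf _ _ (Or.inl hB0) (Or.inl hB0)
      | exact hf _ _ (Or.inl hB0) (Or.inr hB1)
      | exact hf _ _ (Or.inr hB1) (Or.inl hB0)
      | exact hf _ _ (Or.inr hB1) (Or.inr hB1)
  exact ⟨hcase _ _ key1, hcase _ _ key2⟩
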